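/- Let y ∈ (b_{i−1}, b_i) for some i ∈ {1,…,ℓ}, and let j ∈ I(y) with h_j = (g restricted to (α_{j−1}, α_j))⁻¹ the local inverse of g on the j-th monotonicity piece. Then h_j is differentiable at y and |h_j′(y)| = η′(u_j(y)); that is, the absolute derivative of every local inverse of g equals the derivative of the single unfolded inverse η evaluated at the corresponding unfolded point. -/

import Mathlib

/-- The index set `I(y)` of monotonicity pieces `A_j` whose image contains `y`,
where `A_j = [α_{j-1}, α_j)` for `j < k` and `A_k = [α_{k-1}, α_k]`. -/
def IdxSet (g : ℝ → ℝ) (a : ℕ → ℝ) (k : ℕ) (y : ℝ) : Set ℕ :=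
  {j | 1 ≤ j ∧ j ≤ k ∧
    ∃ x ∈ (if j = k then Set.Icc (a (k - 1)) (a k) else Set.Ico (a (j - 1)) (a j)), g x = y}

/-- The partial sums `m_j = |λ_1| + ⋯ + |λ_j|` of the absolute increments
`λ_i = g(α_i) - g(α_{i-1})`. -/
noncomputable def mseq (g : ℝ → ℝ) (a : ℕ → ℝ) : ℕ → ℝ :=
  fun j => ∑ i ∈ Finset.range j, |g (a (i + 1)) - g (a i)|

/-- Weak monotonicity of a sequence from strict step monotonicity up to `k`. -/
lemma aux_seq_mono (a : ℕ → ℝ) (k : ℕ) (h : ∀ j < k, a j < a (j + 1)) :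
    ∀ m n, m ≤ n → n ≤ k → a m ≤ a n := by
  intro m n
  induction n with
  | zero => intro h1 _; have : m = 0 := by omega
            subst this; exact le_rfl
  | succ n ih =>
    intro h1 h2
    rcases Nat.lt_or_ge m (n + 1) with h' | h'
    · exact (ih (by omega) (by omega)).trans (h n (by omega)).le
    · have : m = n + 1 := by omega
      subst this; exact le_rfl

/-- Strict monotonicity of a sequence from strict step monotonicity up to `k`. -/
lemma aux_seq_smono (b : ℕ → ℝ) (ℓ : ℕ) (h : ∀ i < ℓ, b i < b (i + 1)) :
    ∀ m n, m < n → n ≤ ℓ → b m < b n := by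
  intro m n
  induction n with
  | zero => intro h1 _; exact absurd h1 (Nat.not_lt_zero m)
  | succ n ih =>
    intro h1 h2
    rcases Nat.lt_or_ge m n with h' | h'
    · exact (ih h' (by omega)).trans (h n (by omega))
    · have hmn : m = n := by omega
      rw [hmn]; exact h n (by omega)

/-- Continuity at a point of a local inverse of a strictly monotone function. -/
lemma contAt_inv_mono {g h : ℝ → ℝ} {p q c d y : ℝ}
    (hg : StrictMonoOn g (Set.Icc p q)) (hy : y ∈ Set.Ioo c d)
    (hh : ∀ z ∈ Set.Ioo c d, h z ∈ Set.Icc p q ∧ g (h z) = z)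
    (hx : h y ∈ Set.Ioo p q) : ContinuousAt h y := by
  rw [Metric.continuousAt_iff]
  intro ε hε
  obtain ⟨hpq1, hpq2⟩ := hx
  have hpq : p < q := lt_trans hpq1 hpq2
  obtain ⟨x₁, hx₁⟩ := exists_between (show max p (h y - ε) < h y from max_lt hpq1 (by linarith))
  obtain ⟨x₂, hx₂⟩ := exists_between (show h y < min q (h y + ε) from lt_min hpq2 (by linarith))
  have hx₁m : x₁ ∈ Set.Icc p q := ⟨(le_max_left p _).trans hx₁.1.le, (hx₁.2.trans hpq2).le⟩
  have hx₂m : x₂ ∈ Set.Icc p q := ⟨(hpq1.trans hx₂.1).le, (hx₂.2.trans_le (min_le_left q _)).le⟩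
  have hym : h y ∈ Set.Icc p q := ⟨hpq1.le, hpq2.le⟩
  have hgy : g (h y) = y := (hh y hy).2
  have h1 : g x₁ < y := hgy ▸ hg hx₁m hym hx₁.2
  have h2 : y < g x₂ := hgy ▸ hg hym hx₂m hx₂.1
  refine ⟨min (min (y - g x₁) (g x₂ - y)) (min (y - c) (d - y)),
    lt_min (lt_min (by linarith) (by linarith))
      (lt_min (by linarith [hy.1]) (by linarith [hy.2])), ?_⟩
  intro z hz
  rw [Real.dist_eq] at hz
  have hz1 : |z - y| < y - g x₁ := lt_of_lt_of_le hz (le_trans (min_le_left _ _) (min_le_left _ _))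
  have hz2 : |z - y| < g x₂ - y := lt_of_lt_of_le hz (le_trans (min_le_left _ _) (min_le_right _ _))
  have hz3 : |z - y| < y - c := lt_of_lt_of_le hz (le_trans (min_le_right _ _) (min_le_left _ _))
  have hz4 : |z - y| < d - y := lt_of_lt_of_le hz (le_trans (min_le_right _ _) (min_le_right _ _))
  rw [abs_lt] at hz1 hz2 hz3 hz4
  obtain ⟨hzm, hgz⟩ := hh z ⟨by linarith, by linarith⟩
  have hlt1 : x₁ < h z := by
    by_contra hle
    push_neg at hle
    have := hg.monotoneOn hzm hx₁m hle
    rw [hgz] at this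
    linarith
  have hlt2 : h z < x₂ := by
    by_contra hle
    push_neg at hle
    have := hg.monotoneOn hx₂m hzm hle
    rw [hgz] at this
    linarith
  rw [Real.dist_eq, abs_lt]
  have := hx₁.1; have := hx₂.2
  constructor
  · have : h y - ε ≤ max p (h y - ε) := le_max_right _ _
    linarith
  · have : min q (h y + ε) ≤ h y + ε := min_le_right _ _
    linarith

/-- Continuity at a point of a local inverse of a strictly antitone function. -/
lemma contAt_inv_anti {g h : ℝ → ℝ} {p q c d y : ℝ}
    (hg : StrictAntiOn g (Set.Icc p q)) (hy : y ∈ Set.Ioo c d)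
    (hh : ∀ z ∈ Set.Ioo c d, h z ∈ Set.Icc p q ∧ g (h z) = z)
    (hx : h y ∈ Set.Ioo p q) : ContinuousAt h y := by
  have key : ContinuousAt (fun z => h (-z)) (-y) := by
    apply contAt_inv_mono (g := fun x => -g x) (c := -d) (d := -c)
    · intro x hxm x' hx'm hlt
      simpa using hg hxm hx'm hlt
    · exact ⟨by linarith [hy.2], by linarith [hy.1]⟩
    · intro z hz
      have hz' : -z ∈ Set.Ioo c d := ⟨by linarith [hz.2], by linarith [hz.1]⟩
      exact ⟨(hh (-z) hz').1, by simp [(hh (-z) hz').2]⟩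
    · simpa using hx
  have : ContinuousAt (fun z => h (- -z)) y := key.comp (continuousAt_id.neg)
  simpa using this

theorem stmt14
    (α β : ℝ) (hαβ : α < β)
    (k : ℕ) (hk : 0 < k)
    (a : ℕ → ℝ) (ha0 : a 0 = α) (hak : a k = β)
    (hamono : ∀ j < k, a j < a (j + 1))
    (g g' : ℝ → ℝ)
    (hderiv : ∀ x ∈ Set.Icc α β, HasDerivWithinAt g (g' x) (Set.Icc α β) x)
    (hg'cont : ContinuousOn g' (Set.Icc α β))
    (hpiece : ∀ j, 1 ≤ j → j ≤ k →
      StrictMonoOn g (Set.Ioo (a (j - 1)) (a j)) ∨ StrictAntiOn g (Set.Ioo (a (j - 1)) (a j)))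
    (hg'ne : ∀ j, 1 ≤ j → j ≤ k → ∀ x ∈ Set.Ioo (a (j - 1)) (a j), g' x ≠ 0)
    (hcrit : ∀ j, 0 < j → j < k → g' (a j) = 0 ∧
      ((∀ᶠ x in nhdsWithin (a j) (Set.Icc α β \ {a j}), g x < g (a j)) ∨
       (∀ᶠ x in nhdsWithin (a j) (Set.Icc α β \ {a j}), g (a j) < g x)))
    (ℓ : ℕ) (b : ℕ → ℝ)
    (hbmono : ∀ i < ℓ, b i < b (i + 1))
    (hB : g '' {x | ∃ j ≤ k, a j = x} = {y | ∃ i ≤ ℓ, b i = y})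
    (G : ℝ → ℝ)
    (hG : ∀ j, 1 ≤ j → j ≤ k → ∀ x ∈ Set.Icc (a (j - 1)) (a j),
      G x = mseq g a (j - 1) + |g x - g (a (j - 1))|)
    (e : ℝ → ℝ)
    (heG : ∀ x ∈ Set.Icc α β, e (G x) = x)
    (hGe : ∀ u ∈ Set.Icc 0 (mseq g a k), G (e u) = u)
    (i : ℕ) (hi1 : 1 ≤ i) (hiℓ : i ≤ ℓ)
    (y : ℝ) (hy : y ∈ Set.Ioo (b (i - 1)) (b i))
    (j : ℕ) (hj : j ∈ IdxSet g a k y)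
    (h : ℝ → ℝ)
    (hh : ∀ z ∈ Set.Ioo (b (i - 1)) (b i),
      h z ∈ Set.Icc (a (j - 1)) (a j) ∧ g (h z) = z) :
    ∃ d₁ d₂ : ℝ, HasDerivAt h d₁ y ∧
      HasDerivAt e d₂
        (mseq g a (j - 1) + (y - g (a (j - 1))) * Real.sign (g (a j) - g (a (j - 1)))) ∧
      |d₁| = d₂ := by
  obtain ⟨hj1, hjk, -⟩ := hj
  set p := a (j - 1) with hp
  set q := a j with hq
  set m := mseq g a (j - 1) with hm
  set s := Real.sign (g q - g p) with hs
  have hjj : j - 1 + 1 = j := Nat.succ_pred_eq_of_pos hj1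
  have hpq : p < q := by
    have := hamono (j - 1) (by omega)
    rwa [hjj] at this
  have hαp : α ≤ p := ha0 ▸ aux_seq_mono a k hamono 0 (j - 1) (Nat.zero_le _) (by omega)
  have hqβ : q ≤ β := hak ▸ aux_seq_mono a k hamono j k hjk le_rfl
  have hsub : Set.Icc p q ⊆ Set.Icc α β := Set.Icc_subset_Icc hαp hqβ
  -- basic facts about the point x₀ = h y
  obtain ⟨hx₀m, hgx₀y⟩ := hh y hy
  -- endpoint values are in B, hence outside (b (i-1), b i)
  have hBout : ∀ n, n ≤ k → g (a n) ∉ Set.Ioo (b (i - 1)) (b i) := by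
    intro n hn hmem
    have : g (a n) ∈ {y | ∃ i ≤ ℓ, b i = y} := by
      rw [← hB]; exact ⟨a n, ⟨n, hn, rfl⟩, rfl⟩
    obtain ⟨r, hrℓ, hbr⟩ := this
    rcases Nat.lt_or_ge r i with h' | h'
    · have : b r ≤ b (i - 1) := by
        rcases Nat.lt_or_ge r (i - 1) with h'' | h''
        · exact (aux_seq_smono b ℓ hbmono r (i - 1) h'' (by omega)).le
        · have : r = i - 1 := by omega
          simp [this]
      rw [hbr] at this
      exact absurd hmem.1 (not_lt.mpr this)
    · have : b i ≤ b r := by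
        rcases Nat.lt_or_ge i r with h'' | h''
        · exact (aux_seq_smono b ℓ hbmono i r h'' hrℓ).le
        · have : r = i := by omega
          simp [this]
      rw [hbr] at this
      exact absurd hmem.2 (not_lt.mpr this)
  have hgp_ne : g p ≠ y := by
    intro hE; exact hBout (j - 1) (by omega) (hE ▸ hy)
  have hgq_ne : g q ≠ y := by
    intro hE; exact hBout j hjk (hE ▸ hy)
  have hx₀ : h y ∈ Set.Ioo p q := by
    refine ⟨lt_of_le_of_ne hx₀m.1 ?_, lt_of_le_of_ne hx₀m.2 ?_⟩
    · intro hE; exact hgp_ne (by rw [hE, hgx₀y])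
    · intro hE; exact hgq_ne (by rw [← hE, hgx₀y])
  have hIooSub : Set.Ioo p q ⊆ Set.Icc α β := fun x hx => ⟨by linarith [hx.1], by linarith [hx.2]⟩
  have hda : ∀ x ∈ Set.Ioo p q, HasDerivAt g (g' x) x := by
    intro x hx
    exact (hderiv x (hIooSub hx)).hasDerivAt
      (Icc_mem_nhds (by linarith [hx.1]) (by linarith [hx.2]))
  have hgcont : ContinuousOn g (Set.Icc α β) := fun x hx => (hderiv x hx).continuousWithinAt
  have hne : g' (h y) ≠ 0 := hg'ne j hj1 hjk (h y) hx₀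
  -- the derivative g' has constant sign on (p, q)
  have hsign : (∀ x ∈ Set.Ioo p q, 0 < g' x) ∨ (∀ x ∈ Set.Ioo p q, g' x < 0) := by
    have key : ∀ x₁ ∈ Set.Ioo p q, ∀ x₂ ∈ Set.Ioo p q, 0 < g' x₁ → g' x₂ < 0 → False := by
      intro x₁ h₁ x₂ h₂ hpos hneg
      have hsub' : Set.uIcc x₁ x₂ ⊆ Set.Ioo p q := Set.ordConnected_Ioo.uIcc_subset h₁ h₂
      have hcont' : ContinuousOn g' (Set.uIcc x₁ x₂) :=
        hg'cont.mono (hsub'.trans hIooSub)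
      have h0 : (0 : ℝ) ∈ Set.uIcc (g' x₁) (g' x₂) := by
        rw [Set.mem_uIcc]; right; exact ⟨hneg.le, hpos.le⟩
      obtain ⟨ξ, hξ, hξ0⟩ := intermediate_value_uIcc hcont' h0
      exact hg'ne j hj1 hjk ξ (hsub' hξ) hξ0
    rcases lt_or_gt_of_ne hne with hneg | hpos
    · right; intro x hx
      by_contra hge
      push_neg at hge
      have : 0 < g' x := lt_of_le_of_ne hge (Ne.symm (hg'ne j hj1 hjk x hx))
      exact key x hx (h y) hx₀ this hneg
    · left; intro x hx
      by_contra hge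
      push_neg at hge
      have : g' x < 0 := lt_of_le_of_ne hge (hg'ne j hj1 hjk x hx)
      exact key (h y) hx₀ x hx hpos this
  have hderivIcc : ∀ x ∈ interior (Set.Icc p q), deriv g x = g' x := by
    intro x hx
    rw [interior_Icc] at hx
    exact (hda x hx).deriv
  -- branch: obtain the four sign-dependent facts
  obtain ⟨hcont, hs1, hposu, habs⟩ :
      ContinuousAt h y ∧ s * s = 1 ∧ 0 < (y - g p) * s ∧
        |(g' (h y))⁻¹| = (g' (h y))⁻¹ * s := by
    rcases hsign with hpos | hneg
    · have hmono : StrictMonoOn g (Set.Icc p q) := by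
        apply strictMonoOn_of_deriv_pos (convex_Icc p q) (hgcont.mono hsub)
        intro x hx
        rw [hderivIcc x hx]
        rw [interior_Icc] at hx
        exact hpos x hx
      have hgpq : g p < g q := hmono ⟨le_rfl, hpq.le⟩ ⟨hpq.le, le_rfl⟩ hpq
      have hs1' : s = 1 := by rw [hs]; exact Real.sign_of_pos (by linarith)
      have hgy : g p < y := by
        have := hmono ⟨le_rfl, hpq.le⟩ hx₀m hx₀.1
        rwa [hgx₀y] at this
      refine ⟨contAt_inv_mono hmono hy hh hx₀, by rw [hs1']; norm_num, ?_, ?_⟩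
      · rw [hs1']; nlinarith
      · rw [hs1', mul_one, abs_of_pos]
        exact inv_pos.mpr (hpos (h y) hx₀)
    · have hanti : StrictAntiOn g (Set.Icc p q) := by
        apply strictAntiOn_of_deriv_neg (convex_Icc p q) (hgcont.mono hsub)
        intro x hx
        rw [hderivIcc x hx]
        rw [interior_Icc] at hx
        exact hneg x hx
      have hgpq : g q < g p := hanti ⟨le_rfl, hpq.le⟩ ⟨hpq.le, le_rfl⟩ hpq
      have hs1' : s = -1 := by rw [hs]; exact Real.sign_of_neg (by linarith)
      have hgy : y < g p := by
        have := hanti ⟨le_rfl, hpq.le⟩ hx₀m hx₀.1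
        rwa [hgx₀y] at this
      refine ⟨contAt_inv_anti hanti hy hh hx₀, by rw [hs1']; norm_num, ?_, ?_⟩
      · rw [hs1']; nlinarith
      · rw [hs1']
        have : (g' (h y))⁻¹ < 0 := inv_neg''.mpr (hneg (h y) hx₀)
        rw [abs_of_neg this]; ring
  have habs_s : |s| = 1 := by
    rcases mul_self_eq_one_iff.mp hs1 with h' | h' <;> simp [h']
  -- derivative of h at y
  have hev : ∀ᶠ z in nhds y, g (h z) = z := by
    filter_upwards [Ioo_mem_nhds hy.1 hy.2] with z hz using (hh z hz).2
  have hDh : HasDerivAt h (g' (h y))⁻¹ y :=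
    HasDerivAt.of_local_left_inverse hcont (hda (h y) hx₀) hne hev
  refine ⟨(g' (h y))⁻¹, (g' (h y))⁻¹ * s, hDh, ?_, habs⟩
  -- derivative of e at u
  set u := m + (y - g p) * s with hu
  have key : g p + s * (u - m) = y := by
    have h1 : s * (u - m) = (y - g p) * (s * s) := by rw [hu]; ring
    rw [h1, hs1]; ring
  have hinner : HasDerivAt (fun v => g p + s * (v - m)) s u := by
    simpa using (((hasDerivAt_id u).sub_const m).const_mul s).const_add (g p)
  have hDh' : HasDerivAt h (g' (h y))⁻¹ (g p + s * (u - m)) := key ▸ hDh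
  have hcomp : HasDerivAt (fun v => h (g p + s * (v - m))) ((g' (h y))⁻¹ * s) u := by
    have := HasDerivAt.comp u hDh' hinner
    exact this
  have hT : {v : ℝ | m < v ∧ g p + s * (v - m) ∈ Set.Ioo (b (i - 1)) (b i)} ∈ nhds u := by
    apply IsOpen.mem_nhds
    · exact (isOpen_lt continuous_const continuous_id).inter
        (IsOpen.preimage (continuous_const.add (continuous_const.mul (continuous_id.sub continuous_const))) isOpen_Ioo)
    · exact ⟨by rw [hu]; linarith, key ▸ hy⟩
  have hEq : ∀ v ∈ {v : ℝ | m < v ∧ g p + s * (v - m) ∈ Set.Ioo (b (i - 1)) (b i)},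
      e v = h (g p + s * (v - m)) := by
    intro v hv
    obtain ⟨hvm, hw⟩ := hv
    obtain ⟨hw1, hw2⟩ := hh (g p + s * (v - m)) hw
    have hGw : G (h (g p + s * (v - m))) = v := by
      rw [hG j hj1 hjk _ hw1, hw2]
      have h1 : g p + s * (v - m) - g p = s * (v - m) := by ring
      rw [← hp, h1, abs_mul, habs_s, one_mul, abs_of_pos (by linarith), ← hm]
      ring
    calc e v = e (G (h (g p + s * (v - m)))) := by rw [hGw]
    _ = h (g p + s * (v - m)) := heG _ (hsub hw1)
  have heF : e =ᶠ[nhds u] fun v => h (g p + s * (v - m)) :=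
    Filter.eventuallyEq_of_mem hT hEq
  exact hcomp.congr_of_eventuallyEq heF
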